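/- Let A be a symmetric matrix indexed by V, let S be a proper strongly homogeneous set for A with s ∈ S. If σ₁ = (x_1, ..., x_p) is a Robinson ordering of A[S] and σ₂ = (y_1, ..., y_{j-1}, s, y_j, ..., y_q) is a Robinson ordering of A/S, then σ = (y_1, ..., y_{j-1}, x_1, ..., x_p, y_j, ..., y_q) is a Robinson ordering of A. -/

import Mathlib

/-- The consecutive pairs of `l` avoid `z` with respect to the matrix `A`. -/
def AvoidChain {V : Type*} (A : V → V → ℝ) (z : V) (l : List V) : Prop :=
  l.Chain' fun u w => min (A u z) (A w z) < A u w

/-- `l` is a path from `x` to `y` avoiding `z` in `A`: a sequence of distinct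
elements starting at `x`, ending at `y`, each consecutive pair avoiding `z`. -/
def AvoidPath {V : Type*} (A : V → V → ℝ) (z x y : V) (l : List V) : Prop :=
  l.Nodup ∧ l.head? = some x ∧ l.getLast? = some y ∧ AvoidChain A z l

/-- `x ~^z y`: there is a path from `x` to `y` avoiding `z` in `A`. -/
def Avoids {V : Type*} (A : V → V → ℝ) (z x y : V) : Prop :=
  ∃ l, AvoidPath A z x y l

/-- `{x,y,z}` is a weighted asteroidal triple of `A`. -/
def IsWAT {V : Type*} (A : V → V → ℝ) (x y z : V) : Prop :=
  x ≠ y ∧ y ≠ z ∧ x ≠ z ∧ Avoids A z x y ∧ Avoids A x y z ∧ Avoids A y z x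

/-- `π` is a Robinson ordering of `A`. -/
def IsRobinsonOrdering {V : Type*} [Fintype V] (A : V → V → ℝ)
    (π : Fin (Fintype.card V) ≃ V) : Prop :=
  ∀ i j k : Fin (Fintype.card V), i < j → j < k →
    A (π i) (π k) ≤ min (A (π i) (π j)) (A (π j) (π k))

/-- `A` is Robinsonian: it admits a Robinson ordering. -/
def Robinsonian {V : Type*} [Fintype V] (A : V → V → ℝ) : Prop :=
  ∃ π : Fin (Fintype.card V) ≃ V, IsRobinsonOrdering A π

/-- `S` is strongly homogeneous for `A`. -/
def StronglyHomogeneous {V : Type*} [DecidableEq V] (A : V → V → ℝ) (S : Finset V) : Prop :=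
  ∀ x ∉ S, ∀ y ∈ S, ∀ z ∈ S, A x y = A x z ∧ A x y ≤ A y z

/-- `a` is critical for `A`: between any two distinct elements of `V \ {a}`
there is a path avoiding `a`. -/
def IsCritical {V : Type*} (A : V → V → ℝ) (a : V) : Prop :=
  ∀ x y : V, x ≠ a → y ≠ a → x ≠ y → Avoids A a x y

/-- The similarity layers of `A` rooted at `a`, together with the union of the
layers so far: `(simLayersAux A a n).1` is the `n`-th layer `X_n` and
`(simLayersAux A a n).2 = X_0 ∪ ⋯ ∪ X_n`. -/
def simLayersAux {V : Type*} (A : V → V → ℝ) (a : V) : ℕ → Set V × Set V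
  | 0 => ({a}, {a})
  | n + 1 =>
    let U := (simLayersAux A a n).2
    let L := { y | y ∉ U ∧ ∀ x ∈ U, ∀ z ∉ U, A x z ≤ A x y }
    (L, U ∪ L)

/-- The `n`-th similarity layer `X_n` of `A` rooted at `a`. -/
def simLayer {V : Type*} (A : V → V → ℝ) (a : V) (n : ℕ) : Set V :=
  (simLayersAux A a n).1

/-- The Robinson condition for the list of indices `l` with respect to `B`. -/
def IsRobinsonList {V : Type*} (B : V → V → ℝ) (l : List V) : Prop :=
  ∀ (i j k : ℕ) (hij : i < j) (hjk : j < k) (hk : k < l.length),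
    B (l[i]'(by omega)) (l[k]'hk) ≤
      min (B (l[i]'(by omega)) (l[j]'(by omega))) (B (l[j]'(by omega)) (l[k]'hk))

/-- `l` is a Robinson ordering of the principal submatrix of `B` indexed by `W`. -/
def RobinsonListOf {V : Type*} [DecidableEq V] (B : V → V → ℝ) (W : Finset V)
    (l : List V) : Prop :=
  l.Nodup ∧ (∀ v : V, v ∈ l ↔ v ∈ W) ∧ IsRobinsonList B l


lemma get3_left {V : Type*} {p m q : List V} {i : ℕ} {h : i < (p ++ m ++ q).length}
    (hi : i < p.length) : (p ++ m ++ q)[i]'h = p[i]'hi := by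
  rw [List.getElem_append_left (show i < (p ++ m).length by simp; omega),
      List.getElem_append_left hi]

lemma get3_mid {V : Type*} {p m q : List V} {t i : ℕ} {h : i < (p ++ m ++ q).length}
    (ht : t < m.length) (he : i = p.length + t) : (p ++ m ++ q)[i]'h = m[t]'ht := by
  subst he
  rw [List.getElem_append_left (show p.length + t < (p ++ m).length by simp; omega),
      List.getElem_append_right (show p.length ≤ p.length + t by omega)]
  congr 1; omega

lemma get3_right {V : Type*} {p m q : List V} {t i : ℕ} {h : i < (p ++ m ++ q).length}
    (ht : t < q.length) (he : i = p.length + m.length + t) : (p ++ m ++ q)[i]'h = q[t]'ht := by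
  subst he
  rw [List.getElem_append_right
      (show (p ++ m).length ≤ p.length + m.length + t by simp only [List.length_append]; omega)]
  congr 1; simp only [List.length_append]; omega

lemma getc_left {V : Type*} {p q : List V} {s : V} {i : ℕ} {h : i < (p ++ s :: q).length}
    (hi : i < p.length) : (p ++ s :: q)[i]'h = p[i]'hi := List.getElem_append_left hi

lemma getc_mid {V : Type*} {p q : List V} {s : V} {h : p.length < (p ++ s :: q).length} :
    (p ++ s :: q)[p.length]'h = s := by
  rw [List.getElem_append_right le_rfl]; simp

lemma getc_right {V : Type*} {p q : List V} {s : V} {t i : ℕ} {h : i < (p ++ s :: q).length}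
    (ht : t < q.length) (he : i = p.length + 1 + t) : (p ++ s :: q)[i]'h = q[t]'ht := by
  subst he
  rw [List.getElem_append_right (show p.length ≤ p.length + 1 + t by omega)]
  have hx : p.length + 1 + t - p.length = t + 1 := by omega
  simp only [hx, List.getElem_cons_succ]

theorem stmt_4 {V : Type*} [Fintype V] [DecidableEq V] (A : V → V → ℝ)
    (hsym : ∀ u v : V, A u v = A v u)
    (S : Finset V) (hhom : StronglyHomogeneous A S)
    (hcard : 2 ≤ S.card) (hproper : S.card ≤ Fintype.card V - 1)
    (s : V) (hs : s ∈ S)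
    (σ₁ : List V) (hσ₁ : RobinsonListOf A S σ₁)
    (p q : List V)
    (hσ₂ : RobinsonListOf A ((Finset.univ \ S) ∪ {s}) (p ++ s :: q)) :
    RobinsonListOf A Finset.univ (p ++ σ₁ ++ q) := by
  obtain ⟨hn1, hm1, hr1⟩ := hσ₁
  obtain ⟨hn2, hm2, hr2⟩ := hσ₂
  obtain ⟨hpn, hsqn, hdj⟩ := List.nodup_append'.mp hn2
  have hqn : q.Nodup := (List.nodup_cons.mp hsqn).2
  have hsq : s ∉ q := (List.nodup_cons.mp hsqn).1
  have hsp : s ∉ p := fun h => hdj h List.mem_cons_self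
  have hpS : ∀ x ∈ p, x ∉ S := by
    intro x hx hxS
    have hx2 := (hm2 x).1 (by simp [hx])
    simp only [Finset.mem_union, Finset.mem_sdiff, Finset.mem_univ, true_and,
      Finset.mem_singleton] at hx2
    rcases hx2 with h | h
    · exact h hxS
    · subst h; exact hsp hx
  have hqS : ∀ x ∈ q, x ∉ S := by
    intro x hx hxS
    have hx2 := (hm2 x).1 (by simp [hx])
    simp only [Finset.mem_union, Finset.mem_sdiff, Finset.mem_univ, true_and,
      Finset.mem_singleton] at hx2
    rcases hx2 with h | h
    · exact h hxS
    · subst h; exact hsq hx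
  have hσS : ∀ x ∈ σ₁, x ∈ S := fun x hx => (hm1 x).1 hx
  refine ⟨?_, ?_, ?_⟩
  · rw [List.nodup_append', List.nodup_append']
    refine ⟨⟨hpn, hn1, fun a hap haσ => hpS a hap (hσS a haσ)⟩, hqn, ?_⟩
    intro a ha haq
    rcases List.mem_append.mp ha with h | h
    · exact hdj h (List.mem_cons_of_mem _ haq)
    · exact hqS a haq (hσS a h)
  · intro v
    simp only [Finset.mem_univ, iff_true, List.mem_append]
    by_cases hv : v ∈ S
    · exact Or.inl (Or.inr ((hm1 v).2 hv))
    · have hv2 : v ∈ p ++ s :: q := (hm2 v).2 (by simp [hv])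
      rcases List.mem_append.mp hv2 with h | h
      · exact Or.inl (Or.inl h)
      · rcases List.mem_cons.mp h with h | h
        · exact absurd (h ▸ hs) hv
        · exact Or.inr h
  · intro i j k hij hjk hk
    have hk' : k < p.length + σ₁.length + q.length := by
      simp only [List.length_append] at hk; omega
    have hm2len : ∀ x : ℕ, x < p.length + 1 + q.length → x < (p ++ s :: q).length := by
      intro x hx; simp only [List.length_append, List.length_cons]; omega
    have memp : ∀ (t : ℕ) (ht : t < p.length), p[t]'ht ∉ S :=
      fun t ht => hpS _ (List.getElem_mem ht)
    have memq : ∀ (t : ℕ) (ht : t < q.length), q[t]'ht ∉ S :=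
      fun t ht => hqS _ (List.getElem_mem ht)
    have memσ : ∀ (t : ℕ) (ht : t < σ₁.length), σ₁[t]'ht ∈ S :=
      fun t ht => hσS _ (List.getElem_mem ht)
    rcases lt_or_ge i p.length with hiP | hiP
    · rcases lt_or_ge j p.length with hjP | hjP
      · rcases lt_or_ge k p.length with hkP | hkP
        · -- p p p
          have H := hr2 i j k hij hjk (hm2len k (by omega))
          rw [getc_left hiP, getc_left hjP, getc_left hkP] at H
          rw [get3_left hiP, get3_left hjP, get3_left hkP]
          exact H
        · rcases lt_or_ge k (p.length + σ₁.length) with hkM | hkM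
          · -- p p σ
            have htk : k - p.length < σ₁.length := by omega
            have H := hr2 i j p.length hij hjP (hm2len _ (by omega))
            rw [getc_left hiP, getc_left hjP, getc_mid] at H
            rw [get3_left hiP, get3_left hjP, get3_mid (i := k) htk (by omega)]
            obtain ⟨e1, -⟩ := hhom _ (memp i hiP) _ (memσ _ htk) _ hs
            obtain ⟨e2, -⟩ := hhom _ (memp j hjP) _ (memσ _ htk) _ hs
            rw [e1, e2]; exact H
          · -- p p q
            have htk : k - (p.length + σ₁.length) < q.length := by omega
            have H := hr2 i j (p.length + 1 + (k - (p.length + σ₁.length))) hij (by omega)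
              (hm2len _ (by omega))
            rw [getc_left hiP, getc_left hjP, getc_right htk rfl] at H
            rw [get3_left hiP, get3_left hjP, get3_right (i := k) htk (by omega)]
            exact H
      · rcases lt_or_ge j (p.length + σ₁.length) with hjM | hjM
        · have htj : j - p.length < σ₁.length := by omega
          rcases lt_or_ge k (p.length + σ₁.length) with hkM | hkM
          · -- p σ σ
            have htk : k - p.length < σ₁.length := by omega
            rw [get3_left hiP, get3_mid (i := j) htj (by omega), get3_mid (i := k) htk (by omega)]
            obtain ⟨e1, e2⟩ := hhom _ (memp i hiP) _ (memσ _ htj) _ (memσ _ htk)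
            rw [← e1]
            exact le_min le_rfl e2
          · -- p σ q
            have htk : k - (p.length + σ₁.length) < q.length := by omega
            have H := hr2 i p.length (p.length + 1 + (k - (p.length + σ₁.length))) hiP
              (by omega) (hm2len _ (by omega))
            rw [getc_left hiP, getc_mid, getc_right htk rfl] at H
            rw [get3_left hiP, get3_mid (i := j) htj (by omega), get3_right (i := k) htk (by omega)]
            obtain ⟨e1, -⟩ := hhom _ (memp i hiP) _ (memσ _ htj) _ hs
            obtain ⟨e2, -⟩ := hhom _ (memq _ htk) _ (memσ _ htj) _ hs
            have e3 : A (σ₁[j - p.length]'htj) (q[k - (p.length + σ₁.length)]'htk)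
                = A s (q[k - (p.length + σ₁.length)]'htk) := by
              rw [hsym, e2, hsym]
            rw [e1, e3]; exact H
        · -- p q q
          have htj : j - (p.length + σ₁.length) < q.length := by omega
          have htk : k - (p.length + σ₁.length) < q.length := by omega
          have H := hr2 i (p.length + 1 + (j - (p.length + σ₁.length)))
            (p.length + 1 + (k - (p.length + σ₁.length))) (by omega) (by omega)
            (hm2len _ (by omega))
          rw [getc_left hiP, getc_right htj rfl, getc_right htk rfl] at H
          rw [get3_left hiP, get3_right (i := j) htj (by omega), get3_right (i := k) htk (by omega)]
          exact H
    · rcases lt_or_ge i (p.length + σ₁.length) with hiM | hiM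
      · have hti : i - p.length < σ₁.length := by omega
        rcases lt_or_ge j (p.length + σ₁.length) with hjM | hjM
        · have htj : j - p.length < σ₁.length := by omega
          rcases lt_or_ge k (p.length + σ₁.length) with hkM | hkM
          · -- σ σ σ
            have htk : k - p.length < σ₁.length := by omega
            have H := hr1 (i - p.length) (j - p.length) (k - p.length) (by omega) (by omega) htk
            rw [get3_mid (i := i) hti (by omega), get3_mid (i := j) htj (by omega), get3_mid (i := k) htk (by omega)]
            exact H
          · -- σ σ q
            have htk : k - (p.length + σ₁.length) < q.length := by omega
            rw [get3_mid (i := i) hti (by omega), get3_mid (i := j) htj (by omega), get3_right (i := k) htk (by omega)]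
            obtain ⟨e1, e2⟩ := hhom _ (memq _ htk) _ (memσ _ hti) _ (memσ _ htj)
            rw [hsym (σ₁[i - p.length]'hti) (q[k - (p.length + σ₁.length)]'htk)]
            refine le_min e2 ?_
            rw [e1, hsym]
        · -- σ q q
          have htj : j - (p.length + σ₁.length) < q.length := by omega
          have htk : k - (p.length + σ₁.length) < q.length := by omega
          have H := hr2 p.length (p.length + 1 + (j - (p.length + σ₁.length)))
            (p.length + 1 + (k - (p.length + σ₁.length))) (by omega) (by omega)
            (hm2len _ (by omega))
          rw [getc_mid, getc_right htj rfl, getc_right htk rfl] at H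
          rw [get3_mid (i := i) hti (by omega), get3_right (i := j) htj (by omega), get3_right (i := k) htk (by omega)]
          obtain ⟨e1, -⟩ := hhom _ (memq _ htj) _ (memσ _ hti) _ hs
          obtain ⟨e2, -⟩ := hhom _ (memq _ htk) _ (memσ _ hti) _ hs
          have g1 : A (σ₁[i - p.length]'hti) (q[k - (p.length + σ₁.length)]'htk)
              = A s (q[k - (p.length + σ₁.length)]'htk) := by rw [hsym, e2, hsym]
          have g2 : A (σ₁[i - p.length]'hti) (q[j - (p.length + σ₁.length)]'htj)
              = A s (q[j - (p.length + σ₁.length)]'htj) := by rw [hsym, e1, hsym]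
          rw [g1, g2]; exact H
      · -- q q q
        have hti : i - (p.length + σ₁.length) < q.length := by omega
        have htj : j - (p.length + σ₁.length) < q.length := by omega
        have htk : k - (p.length + σ₁.length) < q.length := by omega
        have H := hr2 (p.length + 1 + (i - (p.length + σ₁.length)))
          (p.length + 1 + (j - (p.length + σ₁.length)))
          (p.length + 1 + (k - (p.length + σ₁.length))) (by omega) (by omega)
          (hm2len _ (by omega))
        rw [getc_right hti rfl, getc_right htj rfl, getc_right htk rfl] at H
        rw [get3_right (i := i) hti (by omega), get3_right (i := j) htj (by omega), get3_right (i := k) htk (by omega)]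
        exact H
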